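/- Let ξ₁,…,ξ_D be independent real-valued r.v.s and η a counting r.v. independent of them with P(η ≤ D) = 1. Suppose F_{ξ₁} ∈ 𝒞 and for each k = 2,…,D, either F_{ξ_k} ∈ 𝒞 or \bar F_{ξ_k}(x) = o(\bar F_{ξ₁}(x)). Then the distribution function of S_η = ξ₁+⋯+ξ_η belongs to 𝒞. -/

import Mathlib

open Filter MeasureTheory Topology

/-- The tail function of a real random variable: `x ↦ P(X > x)`. -/
noncomputable def tailDist {Ω : Type*} [MeasurableSpace Ω] (μ : Measure Ω)
    (X : Ω → ℝ) : ℝ → ℝ :=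
  fun x => (μ {ω | x < X ω}).toReal

/-- A tail function `T` is consistently varying:
`lim_{y↑1} limsup_{x→∞} T(xy)/T(x) = 1`. -/
def ConsistentlyVarying (T : ℝ → ℝ) : Prop :=
  Tendsto (fun y : ℝ => Filter.limsup (fun x => T (x * y) / T x) atTop)
    (𝓝[<] (1:ℝ)) (𝓝 1)

set_option linter.unusedSectionVars false
set_option maxHeartbeats 1000000

section TailBasic
variable {Ω : Type*} [MeasurableSpace Ω] {μ : Measure Ω} [IsProbabilityMeasure μ] {X Z : Ω → ℝ}

lemma tailDist_nonneg (X : Ω → ℝ) (x : ℝ) : 0 ≤ tailDist μ X x :=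
  ENNReal.toReal_nonneg

lemma tailDist_antitone (X : Ω → ℝ) : Antitone (tailDist μ X) := by
  intro u v huv
  refine ENNReal.toReal_mono (measure_ne_top μ _) (measure_mono ?_)
  intro ω hω
  exact lt_of_le_of_lt huv hω

lemma tailDist_small (hX : Measurable X) :
    ∀ ε : ℝ, 0 < ε → ∃ N : ℝ, ∀ u : ℝ, N ≤ u → tailDist μ X u ≤ ε := by
  intro ε hε
  have hanti : Antitone (fun n : ℕ => ({ω | (n : ℝ) < X ω} : Set Ω)) := by
    intro m n hmn ω hω
    simp only [Set.mem_setOf_eq] at hω ⊢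
    exact lt_of_le_of_lt (Nat.cast_le.mpr hmn) hω
  have hempty : (⋂ n : ℕ, {ω | (n : ℝ) < X ω}) = ∅ := by
    ext ω
    simp only [Set.mem_iInter, Set.mem_setOf_eq, Set.mem_empty_iff_false, iff_false, not_forall,
      not_lt]
    obtain ⟨n, hn⟩ := exists_nat_ge (X ω)
    exact ⟨n, hn⟩
  have htend : Tendsto (fun n : ℕ => μ {ω | (n : ℝ) < X ω}) atTop (𝓝 0) := by
    have := tendsto_measure_iInter_atTop (μ := μ)
      (fun n => (measurableSet_lt measurable_const hX).nullMeasurableSet)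
      hanti ⟨0, measure_ne_top μ _⟩
    rw [hempty] at this
    simpa [Function.comp_def] using this
  have : ∀ᶠ n : ℕ in atTop, μ {ω | (n : ℝ) < X ω} ≤ ENNReal.ofReal ε := by
    refine htend.eventually_le_const ?_
    simp [hε, ENNReal.ofReal_pos.2 hε]
  obtain ⟨n, hn⟩ := this.exists
  refine ⟨n, fun u hu => ?_⟩
  have hsub : {ω | u < X ω} ⊆ {ω | (n : ℝ) < X ω} := fun ω hω => lt_of_le_of_lt hu hω
  calc tailDist μ X u ≤ (μ {ω | (n : ℝ) < X ω}).toReal :=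
        ENNReal.toReal_mono (measure_ne_top μ _) (measure_mono hsub)
    _ ≤ ε := by
        rw [← ENNReal.ofReal_toReal (measure_ne_top μ _)] at hn
        have := (ENNReal.ofReal_le_ofReal_iff hε.le).1 hn
        exact this

lemma tailDist_large (hX : Measurable X) :
    ∀ ε : ℝ, 0 < ε → ∃ a : ℝ, 0 ≤ a ∧ 1 - ε ≤ tailDist μ X (-a) := by
  intro ε hε
  have hanti : Antitone (fun n : ℕ => ({ω | X ω ≤ -(n : ℝ)} : Set Ω)) := by
    intro m n hmn ω hω
    simp only [Set.mem_setOf_eq] at hω ⊢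
    exact le_trans hω (neg_le_neg (Nat.cast_le.mpr hmn))
  have hempty : (⋂ n : ℕ, {ω | X ω ≤ -(n : ℝ)}) = ∅ := by
    ext ω
    simp only [Set.mem_iInter, Set.mem_setOf_eq, Set.mem_empty_iff_false, iff_false, not_forall,
      not_le]
    obtain ⟨n, hn⟩ := exists_nat_gt (-X ω)
    exact ⟨n, by linarith⟩
  have htend : Tendsto (fun n : ℕ => μ {ω | X ω ≤ -(n : ℝ)}) atTop (𝓝 0) := by
    have := tendsto_measure_iInter_atTop (μ := μ)
      (fun n => (measurableSet_le hX measurable_const).nullMeasurableSet)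
      hanti ⟨0, measure_ne_top μ _⟩
    rw [hempty] at this
    simpa [Function.comp_def] using this
  have : ∀ᶠ n : ℕ in atTop, μ {ω | X ω ≤ -(n : ℝ)} ≤ ENNReal.ofReal ε := by
    refine htend.eventually_le_const ?_
    simp [ENNReal.ofReal_pos.2 hε]
  obtain ⟨n, hn⟩ := this.exists
  refine ⟨n, Nat.cast_nonneg n, ?_⟩
  have hcompl : {ω | -(n:ℝ) < X ω} = {ω | X ω ≤ -(n:ℝ)}ᶜ := by
    ext ω; simp [not_le]
  have hμc : μ {ω | -(n:ℝ) < X ω} = 1 - μ {ω | X ω ≤ -(n:ℝ)} := by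
    rw [hcompl, measure_compl (measurableSet_le hX measurable_const) (measure_ne_top μ _),
      measure_univ]
  have hle : (μ {ω | X ω ≤ -(n:ℝ)}).toReal ≤ ε := by
    rw [← ENNReal.ofReal_toReal (measure_ne_top μ _)] at hn
    exact (ENNReal.ofReal_le_ofReal_iff hε.le).1 hn
  have h1 : μ {ω | X ω ≤ -(n:ℝ)} ≤ 1 := prob_le_one
  have : tailDist μ X (-(n:ℝ)) = 1 - (μ {ω | X ω ≤ -(n:ℝ)}).toReal := by
    rw [tailDist]
    simp only [hμc]
    rw [ENNReal.toReal_sub_of_le h1 ENNReal.one_ne_top]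
    simp
  rw [this]
  linarith

lemma indep_tail_mul (h : ProbabilityTheory.IndepFun X Z μ) (hX : Measurable X)
    (hZ : Measurable Z) (u v : ℝ) :
    (μ ({ω | u < X ω} ∩ {ω | v < Z ω})).toReal = tailDist μ X u * tailDist μ Z v := by
  have : μ ({ω | u < X ω} ∩ {ω | v < Z ω}) = μ {ω | u < X ω} * μ {ω | v < Z ω} := by
    have := h.measure_inter_preimage_eq_mul (s := Set.Ioi u) (t := Set.Ioi v)
      measurableSet_Ioi measurableSet_Ioi
    simpa [Set.preimage, Set.mem_Ioi] using this
  rw [this, ENNReal.toReal_mul, tailDist, tailDist]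

end TailBasic

section TailSum
variable {Ω : Type*} [MeasurableSpace Ω] {μ : Measure Ω} [IsProbabilityMeasure μ] {X Z : Ω → ℝ}

lemma tail_sum_upper (h : ProbabilityTheory.IndepFun X Z μ) (hX : Measurable X)
    (hZ : Measurable Z) {δ x : ℝ} (hδ : 0 < δ) (hδ2 : δ ≤ 1/2) (hx : 0 < x) :
    tailDist μ (fun ω => X ω + Z ω) x ≤
      tailDist μ X (x * (1 - δ)) + tailDist μ Z (x * (1 - δ)) +
        tailDist μ X (x * δ) * tailDist μ Z (x * δ) := by
  have hsub : {ω | x < X ω + Z ω} ⊆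
      ({ω | x * (1 - δ) < X ω} ∪ {ω | x * (1 - δ) < Z ω}) ∪
        ({ω | x * δ < X ω} ∩ {ω | x * δ < Z ω}) := by
    intro ω hω
    simp only [Set.mem_setOf_eq] at hω
    by_cases h1 : x * (1 - δ) < X ω
    · exact Or.inl (Or.inl h1)
    by_cases h2 : x * (1 - δ) < Z ω
    · exact Or.inl (Or.inr h2)
    push_neg at h1 h2
    refine Or.inr ⟨?_, ?_⟩
    · simp only [Set.mem_setOf_eq]; nlinarith
    · simp only [Set.mem_setOf_eq]; nlinarith
  have hμ : μ {ω | x < X ω + Z ω} ≤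
      μ {ω | x * (1 - δ) < X ω} + μ {ω | x * (1 - δ) < Z ω} +
        μ ({ω | x * δ < X ω} ∩ {ω | x * δ < Z ω}) := by
    calc μ {ω | x < X ω + Z ω} ≤ _ := measure_mono hsub
      _ ≤ _ := le_trans (measure_union_le _ _)
          (add_le_add_left (measure_union_le _ _) _)
  have := ENNReal.toReal_mono (by
      refine ENNReal.add_ne_top.2 ⟨ENNReal.add_ne_top.2 ⟨measure_ne_top μ _, measure_ne_top μ _⟩,
        measure_ne_top μ _⟩) hμ
  rw [ENNReal.toReal_add (ENNReal.add_ne_top.2 ⟨measure_ne_top μ _, measure_ne_top μ _⟩)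
      (measure_ne_top μ _), ENNReal.toReal_add (measure_ne_top μ _) (measure_ne_top μ _)] at this
  calc tailDist μ (fun ω => X ω + Z ω) x ≤ _ := this
    _ = _ := by rw [indep_tail_mul h hX hZ]; rfl

lemma tail_sum_lower (h : ProbabilityTheory.IndepFun X Z μ) (hX : Measurable X)
    (hZ : Measurable Z) (a x : ℝ) :
    tailDist μ X (x + a) * tailDist μ Z (-a) + tailDist μ Z (x + a) * tailDist μ X (-a)
      - tailDist μ X (x + a) * tailDist μ Z (x + a)
      ≤ tailDist μ (fun ω => X ω + Z ω) x := by
  set E : Set Ω := {ω | x + a < X ω} ∩ {ω | -a < Z ω} with hE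
  set F : Set Ω := {ω | x + a < Z ω} ∩ {ω | -a < X ω} with hF
  have hEW : E ⊆ {ω | x < X ω + Z ω} := by
    intro ω ⟨h1, h2⟩
    simp only [Set.mem_setOf_eq] at h1 h2 ⊢
    linarith
  have hFW : F ⊆ {ω | x < X ω + Z ω} := by
    intro ω ⟨h1, h2⟩
    simp only [Set.mem_setOf_eq] at h1 h2 ⊢
    linarith
  have hEF : E ∩ F ⊆ {ω | x + a < X ω} ∩ {ω | x + a < Z ω} := by
    intro ω ⟨⟨h1, _⟩, ⟨h3, _⟩⟩
    exact ⟨h1, h3⟩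
  have hmeasF : MeasurableSet F :=
    (measurableSet_lt measurable_const hZ).inter (measurableSet_lt measurable_const hX)
  have hunion : μ E + μ F = μ (E ∪ F) + μ (E ∩ F) := (measure_union_add_inter E hmeasF).symm
  have hEFle : μ (E ∩ F) ≤ μ ({ω | x + a < X ω} ∩ {ω | x + a < Z ω}) := measure_mono hEF
  have hUW : μ (E ∪ F) ≤ μ {ω | x < X ω + Z ω} := measure_mono (Set.union_subset hEW hFW)
  -- pass to reals
  have h1 : (μ E).toReal = tailDist μ X (x + a) * tailDist μ Z (-a) :=
    indep_tail_mul h hX hZ _ _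
  have h2 : (μ F).toReal = tailDist μ Z (x + a) * tailDist μ X (-a) :=
    indep_tail_mul h.symm hZ hX _ _
  have h3 : (μ ({ω | x + a < X ω} ∩ {ω | x + a < Z ω})).toReal
      = tailDist μ X (x + a) * tailDist μ Z (x + a) := indep_tail_mul h hX hZ _ _
  have hEnetop := measure_ne_top μ E
  have hFnetop := measure_ne_top μ F
  have hsum : (μ E).toReal + (μ F).toReal = (μ (E ∪ F)).toReal + (μ (E ∩ F)).toReal := by
    rw [← ENNReal.toReal_add hEnetop hFnetop, hunion,
      ENNReal.toReal_add (measure_ne_top μ _) (measure_ne_top μ _)]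
  have hUWr : (μ (E ∪ F)).toReal ≤ tailDist μ (fun ω => X ω + Z ω) x :=
    ENNReal.toReal_mono (measure_ne_top μ _) hUW
  have hEFr : (μ (E ∩ F)).toReal ≤ tailDist μ X (x + a) * tailDist μ Z (x + a) := by
    rw [← h3]; exact ENNReal.toReal_mono (measure_ne_top μ _) hEFle
  linarith [hsum, hUWr, hEFr, h1.symm ▸ le_refl (μ E).toReal]

end TailSum


def CVB (T : ℝ → ℝ) : Prop :=
  ∀ ε : ℝ, 0 < ε → ∃ y₀ : ℝ, 1/2 ≤ y₀ ∧ y₀ < 1 ∧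
    ∀ y : ℝ, y₀ < y → y < 1 → ∀ᶠ x in atTop, T (x * y) ≤ (1 + ε) * T x

section CVBLemmas
variable {T A B W K : ℝ → ℝ}

lemma ratio_bddBelow (h0 : ∀ x, 0 ≤ T x) (y : ℝ) :
    BddBelow {a : ℝ | ∀ᶠ x in atTop, T (x * y) / T x ≤ a} := by
  refine ⟨0, fun a ha => ?_⟩
  obtain ⟨x, hx⟩ := ha.exists
  exact le_trans (div_nonneg (h0 _) (h0 _)) hx

lemma cvb_of_cv (h0 : ∀ x, 0 < T x) (hT : ConsistentlyVarying T) : CVB T := by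
  intro ε hε
  set ε' : ℝ := min ε 1 / 2 with hε'def
  have hε'pos : 0 < ε' := by positivity
  have hε'le : ε' ≤ 1/2 := by
    rw [hε'def]
    have : min ε 1 ≤ 1 := min_le_right _ _
    linarith
  have hev : ∀ᶠ y in 𝓝[<] (1:ℝ),
      |limsup (fun x => T (x * y) / T x) atTop - 1| < ε' := by
    have := Metric.tendsto_nhds.mp hT ε' hε'pos
    simpa [Real.dist_eq] using this
  obtain ⟨c, hc, hsub⟩ := mem_nhdsLT_iff_exists_Ioo_subset.mp hev
  refine ⟨max c (1/2), le_max_right _ _, ?_, fun y hy hy1 => ?_⟩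
  · simp only [max_lt_iff]
    exact ⟨hc, by norm_num⟩
  · have hyc : y ∈ Set.Ioo c 1 := ⟨lt_of_le_of_lt (le_max_left _ _) hy, hy1⟩
    have hL : |limsup (fun x => T (x * y) / T x) atTop - 1| < ε' := hsub hyc
    set L := limsup (fun x => T (x * y) / T x) atTop with hLdef
    set S := {a : ℝ | ∀ᶠ x in atTop, T (x * y) / T x ≤ a} with hSdef
    have hLS : L = sInf S := by rw [hLdef, limsup_eq]
    have hSne : S.Nonempty := by
      by_contra hne
      rw [Set.not_nonempty_iff_eq_empty] at hne
      rw [hLS, hne, Real.sInf_empty] at hL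
      simp only [zero_sub, abs_neg, abs_one] at hL
      linarith
    have hbdd := ratio_bddBelow (fun x => (h0 x).le) y
    have hLlt : sInf S < 1 + ε := by
      rw [← hLS]
      have : L < 1 + ε' := by
        have := abs_lt.1 hL
        linarith [this.2]
      have : ε' < ε := by
        rw [hε'def]
        rcases le_total ε 1 with hle | hle
        · rw [min_eq_left hle]; linarith
        · rw [min_eq_right hle]; linarith
      linarith [abs_lt.1 hL]
    obtain ⟨a, haS, halt⟩ := (csInf_lt_iff hbdd hSne).1 hLlt
    filter_upwards [haS] with x hx
    have := (div_le_iff₀ (h0 x)).1 (le_trans hx halt.le)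
    linarith

lemma cv_of_cvb (h0 : ∀ x, 0 < T x) (hanti : Antitone T) (h : CVB T) :
    ConsistentlyVarying T := by
  refine Metric.tendsto_nhds.mpr fun ε hε => ?_
  obtain ⟨y₀, hy₀half, hy₀1, hy₀⟩ := h (ε/2) (half_pos hε)
  have hmem : Set.Ioo y₀ 1 ∈ 𝓝[<] (1:ℝ) :=
    Ioo_mem_nhdsLT_of_mem ⟨hy₀1, le_refl 1⟩
  filter_upwards [hmem] with y hy
  obtain ⟨hyl, hyu⟩ := hy
  have hypos : 0 < y := lt_of_lt_of_le (by linarith) (le_of_lt hyl)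
  have hub : ∀ᶠ x in atTop, T (x * y) / T x ≤ 1 + ε/2 := by
    filter_upwards [hy₀ y hyl hyu] with x hx
    exact (div_le_iff₀ (h0 x)).2 hx
  have hlb : ∀ᶠ x in atTop, 1 ≤ T (x * y) / T x := by
    filter_upwards [eventually_ge_atTop (0:ℝ)] with x hx
    have : x * y ≤ x := by nlinarith
    have := hanti this
    rw [le_div_iff₀ (h0 x)]
    linarith
  set S := {a : ℝ | ∀ᶠ x in atTop, T (x * y) / T x ≤ a} with hSdef
  have hbdd := ratio_bddBelow (fun x => (h0 x).le) y
  have hSne : S.Nonempty := ⟨1 + ε/2, hub⟩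
  have hL1 : limsup (fun x => T (x * y) / T x) atTop ≤ 1 + ε/2 := by
    rw [limsup_eq]
    exact csInf_le hbdd hub
  have hL2 : 1 ≤ limsup (fun x => T (x * y) / T x) atTop := by
    rw [limsup_eq]
    refine le_csInf hSne fun a ha => ?_
    obtain ⟨x, h1x, h2x⟩ := (hlb.and ha).exists
    linarith
  rw [Real.dist_eq, abs_lt]
  constructor <;> linarith

lemma cvb_add (hA : CVB A) (hB : CVB B) : CVB (fun x => A x + B x) := by
  intro ε hε
  obtain ⟨ya, hya1, hya2, hya⟩ := hA ε hε
  obtain ⟨yb, hyb1, hyb2, hyb⟩ := hB ε hε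
  refine ⟨max ya yb, le_trans hya1 (le_max_left _ _), max_lt hya2 hyb2, fun y hy hy1 => ?_⟩
  have hyA := hya y (lt_of_le_of_lt (le_max_left _ _) hy) hy1
  have hyB := hyb y (lt_of_le_of_lt (le_max_right _ _) hy) hy1
  filter_upwards [hyA, hyB] with x h1 h2
  show A (x * y) + B (x * y) ≤ (1 + ε) * (A x + B x)
  linarith

lemma cvb_dom (h : CVB T) (hanti : Antitone T) {δ : ℝ} (hδ0 : 0 < δ) (hδ1 : δ < 1) :
    ∃ C : ℝ, 0 < C ∧ ∀ᶠ x in atTop, T (x * δ) ≤ C * T x := by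
  obtain ⟨y₀, hy₀1, hy₀2, hy₀⟩ := h 1 one_pos
  set y := (y₀ + 1) / 2 with hydef
  have hy0 : 0 < y := by rw [hydef]; linarith
  have hyl : y₀ < y := by rw [hydef]; linarith
  have hyu : y < 1 := by rw [hydef]; linarith
  have hev : ∀ᶠ x in atTop, T (x * y) ≤ 2 * T x := by
    have := hy₀ y hyl hyu
    simpa [one_add_one_eq_two] using this
  have hpow : ∀ m : ℕ, ∀ᶠ x in atTop, T (x * y ^ m) ≤ 2 ^ m * T x := by
    intro m
    induction m with
    | zero => filter_upwards with x; simp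
    | succ m ih =>
      have hmap : Tendsto (fun x : ℝ => x * y ^ m) atTop atTop :=
        Tendsto.atTop_mul_const (by positivity) tendsto_id
      filter_upwards [ih, hmap.eventually hev] with x h1 h2
      have : x * y ^ (m + 1) = (x * y ^ m) * y := by ring
      rw [this]
      calc T ((x * y ^ m) * y) ≤ 2 * T (x * y ^ m) := h2
        _ ≤ 2 * (2 ^ m * T x) := by linarith
        _ = 2 ^ (m + 1) * T x := by ring
  obtain ⟨m, hm⟩ := ((tendsto_pow_atTop_nhds_zero_of_lt_one hy0.le hyu).eventually_lt_const
    hδ0).exists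
  refine ⟨2 ^ m, by positivity, ?_⟩
  filter_upwards [hpow m, eventually_ge_atTop (0:ℝ)] with x h1 h2
  have : x * y ^ m ≤ x * δ := by nlinarith
  exact le_trans (hanti this) h1

lemma cvb_long (h : CVB T) (hanti : Antitone T) {a ε : ℝ} (ha : 0 ≤ a) (hε : 0 < ε) :
    ∀ᶠ x in atTop, T x ≤ (1 + ε) * T (x + a) := by
  obtain ⟨y₀, hy₀1, hy₀2, hy₀⟩ := h ε hε
  set y := (y₀ + 1) / 2 with hydef
  have hy0 : 0 < y := by rw [hydef]; linarith
  have hyl : y₀ < y := by rw [hydef]; linarith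
  have hyu : y < 1 := by rw [hydef]; linarith
  have hev := hy₀ y hyl hyu
  have hmap : Tendsto (fun x : ℝ => x + a) atTop atTop := tendsto_atTop_add_const_right _ _ tendsto_id
  filter_upwards [hmap.eventually hev, eventually_ge_atTop (a * y / (1 - y))] with x h1 h2
  have hxy : (x + a) * y ≤ x := by
    have h1y : 0 < 1 - y := by linarith
    rw [div_le_iff₀ h1y] at h2
    nlinarith
  calc T x ≤ T ((x + a) * y) := hanti hxy
    _ ≤ (1 + ε) * T (x + a) := h1
end CVBLemmas

section Conv
variable {T A B W K : ℝ → ℝ}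

lemma cvb_conv
    (hAanti : Antitone A) (hBanti : Antitone B)
    (hA0 : ∀ x, 0 ≤ A x) (hB0 : ∀ x, 0 ≤ B x) (hW0 : ∀ x, 0 ≤ W x) (hK0 : ∀ x, 0 ≤ K x)
    (hCVA : CVB A) (hCVK : CVB K)
    (hAK : ∀ x, A x ≤ K x)
    (hAB : ∀ ε : ℝ, 0 < ε → ∀ᶠ x in atTop, A x + B x ≤ (1 + ε) * K x)
    (hKlong : ∀ ε : ℝ, 0 < ε → ∀ a : ℝ, 0 ≤ a →
      ∀ᶠ x in atTop, K x ≤ (1 + ε) * (A (x + a) + B (x + a)))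
    (hBsmall : ∀ ε : ℝ, 0 < ε → ∃ N : ℝ, ∀ u : ℝ, N ≤ u → B u ≤ ε)
    (hBlarge : ∀ ε : ℝ, 0 < ε → ∃ a : ℝ, 0 ≤ a ∧ 1 - ε ≤ B (-a))
    (hAlarge : ∀ ε : ℝ, 0 < ε → ∃ a : ℝ, 0 ≤ a ∧ 1 - ε ≤ A (-a))
    (hupper : ∀ δ : ℝ, 0 < δ → δ ≤ 1/2 → ∀ x : ℝ, 0 < x →
      W x ≤ A (x * (1 - δ)) + B (x * (1 - δ)) + A (x * δ) * B (x * δ))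
    (hlower : ∀ a x : ℝ,
      A (x + a) * B (-a) + B (x + a) * A (-a) - A (x + a) * B (x + a) ≤ W x) :
    CVB W ∧ (∀ ε : ℝ, 0 < ε → ∀ᶠ x in atTop, K x ≤ (1 + ε) * W x) := by
  -- lower estimate E2
  have hE2 : ∀ ε : ℝ, 0 < ε → ∀ᶠ x in atTop, K x ≤ (1 + ε) * W x := by
    intro ε hε
    set ε₁ : ℝ := min (ε/7) (1/7) with hε₁def
    have hε₁pos : 0 < ε₁ := by rw [hε₁def]; positivity
    have hε₁a : ε₁ ≤ ε/7 := min_le_left _ _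
    have hε₁b : ε₁ ≤ 1/7 := min_le_right _ _
    obtain ⟨a₁, ha₁0, ha₁⟩ := hBlarge ε₁ hε₁pos
    obtain ⟨a₂, ha₂0, ha₂⟩ := hAlarge ε₁ hε₁pos
    set a : ℝ := max a₁ a₂ with hadef
    have ha0 : 0 ≤ a := le_trans ha₁0 (le_max_left _ _)
    have haB : 1 - ε₁ ≤ B (-a) := le_trans ha₁ (hBanti (neg_le_neg (le_max_left _ _)))
    have haA : 1 - ε₁ ≤ A (-a) := le_trans ha₂ (hAanti (neg_le_neg (le_max_right _ _)))
    obtain ⟨N, hN⟩ := hBsmall ε₁ hε₁pos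
    filter_upwards [hKlong ε₁ hε₁pos a ha0, eventually_ge_atTop (N - a)] with x h1 h2
    have hBxa : B (x + a) ≤ ε₁ := hN _ (by linarith)
    have hlow := hlower a x
    have hA' := hA0 (x + a)
    have hB' := hB0 (x + a)
    have key : (1 - 2*ε₁) * (A (x + a) + B (x + a)) ≤ W x := by
      nlinarith [mul_le_mul_of_nonneg_left haB hA', mul_le_mul_of_nonneg_left haA hB',
        mul_le_mul_of_nonneg_left hBxa hA']
    have hAB0 : (0:ℝ) ≤ A (x + a) + B (x + a) := add_nonneg hA' hB'
    have hfac : (1 + ε₁) ≤ (1 + ε) * (1 - 2*ε₁) := by nlinarith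
    calc K x ≤ (1 + ε₁) * (A (x + a) + B (x + a)) := h1
      _ ≤ ((1 + ε) * (1 - 2*ε₁)) * (A (x + a) + B (x + a)) :=
          mul_le_mul_of_nonneg_right hfac hAB0
      _ = (1 + ε) * ((1 - 2*ε₁) * (A (x + a) + B (x + a))) := by ring
      _ ≤ (1 + ε) * W x := mul_le_mul_of_nonneg_left key (by linarith)
  -- upper estimate E1
  have hE1 : ∀ ε : ℝ, 0 < ε → ∀ᶠ x in atTop, W x ≤ (1 + ε) * K x := by
    intro ε hε
    set ε' : ℝ := min (ε/7) 1 with hε'def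
    have hε'pos : 0 < ε' := by rw [hε'def]; positivity
    have hε'a : ε' ≤ ε/7 := min_le_left _ _
    have hε'b : ε' ≤ 1 := min_le_right _ _
    obtain ⟨y₀, hy₀1, hy₀2, hy₀K⟩ := hCVK ε' hε'pos
    set δ : ℝ := (1 - y₀)/2 with hδdef
    have hδ0 : 0 < δ := by rw [hδdef]; linarith
    have hδhalf : δ ≤ 1/2 := by rw [hδdef]; linarith
    have hyl : y₀ < 1 - δ := by rw [hδdef]; linarith
    have hyu : 1 - δ < 1 := by linarith
    obtain ⟨C, hC0, hCdom⟩ := cvb_dom hCVA hAanti hδ0 (by linarith)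
    obtain ⟨N, hN⟩ := hBsmall (ε'/C) (by positivity)
    have hmap1 : Tendsto (fun x : ℝ => x * (1 - δ)) atTop atTop :=
      Tendsto.atTop_mul_const (by linarith) tendsto_id
    filter_upwards [hmap1.eventually (hAB ε' hε'pos), hy₀K (1 - δ) hyl hyu, hCdom,
      eventually_gt_atTop 0, eventually_ge_atTop (N / δ)] with x hABx hKx hCx hx0 hxN
    have hBsm : B (x * δ) ≤ ε' / C := hN _ ((div_le_iff₀ hδ0).1 hxN)
    have hup := hupper δ hδ0 hδhalf x hx0
    have hcross : A (x * δ) * B (x * δ) ≤ ε' * A x := by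
      calc A (x * δ) * B (x * δ) ≤ (C * A x) * (ε' / C) :=
            mul_le_mul hCx hBsm (hB0 _) (mul_nonneg hC0.le (hA0 x))
        _ = ε' * A x := by field_simp
    have hKnn := hK0 x
    have hAKx := hAK x
    calc W x ≤ A (x * (1 - δ)) + B (x * (1 - δ)) + A (x * δ) * B (x * δ) := hup
      _ ≤ (1 + ε') * K (x * (1 - δ)) + ε' * A x := by linarith
      _ ≤ (1 + ε') * ((1 + ε') * K x) + ε' * K x := by
          have := mul_le_mul_of_nonneg_left hKx (by linarith : (0:ℝ) ≤ 1 + ε')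
          have hAxK : ε' * A x ≤ ε' * K x := mul_le_mul_of_nonneg_left hAKx hε'pos.le
          linarith
      _ = ((1 + ε') * (1 + ε') + ε') * K x := by ring
      _ ≤ (1 + ε) * K x := by
          have hsq : ε' * ε' ≤ ε' := by nlinarith
          have hco : (1 + ε') * (1 + ε') + ε' ≤ 1 + ε := by nlinarith
          exact mul_le_mul_of_nonneg_right hco hKnn
  refine ⟨?_, hE2⟩
  intro ε hε
  set ε' : ℝ := min (ε/7) 1 with hε'def
  have hε'pos : 0 < ε' := by rw [hε'def]; positivity
  have hε'a : ε' ≤ ε/7 := min_le_left _ _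
  have hε'b : ε' ≤ 1 := min_le_right _ _
  obtain ⟨y₀, hy₀1, hy₀2, hy₀K⟩ := hCVK ε' hε'pos
  refine ⟨y₀, hy₀1, hy₀2, fun y hy hy1 => ?_⟩
  have hy0 : 0 < y := by linarith
  have hmap : Tendsto (fun x : ℝ => x * y) atTop atTop :=
    Tendsto.atTop_mul_const hy0 tendsto_id
  filter_upwards [hmap.eventually (hE1 ε' hε'pos), hy₀K y hy hy1, hE2 ε' hε'pos] with x a1 a2 a3
  have h1ε' : (0:ℝ) ≤ 1 + ε' := by linarith
  calc W (x * y) ≤ (1 + ε') * K (x * y) := a1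
    _ ≤ (1 + ε') * ((1 + ε') * K x) := mul_le_mul_of_nonneg_left a2 h1ε'
    _ ≤ (1 + ε') * ((1 + ε') * ((1 + ε') * W x)) :=
        mul_le_mul_of_nonneg_left (mul_le_mul_of_nonneg_left a3 h1ε') h1ε'
    _ = ((1 + ε') * ((1 + ε') * (1 + ε'))) * W x := by ring
    _ ≤ (1 + ε) * W x := by
        have hcube : (1 + ε') * ((1 + ε') * (1 + ε')) ≤ 1 + ε := by
          have hsq : ε' * ε' ≤ ε' := by nlinarith
          have hcb : ε' * (ε' * ε') ≤ ε' := by nlinarith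
          nlinarith
        exact mul_le_mul_of_nonneg_right hcube (hW0 x)

end Conv

/-- Theorem 1 of the paper: if `η ≤ D` a.s. is a counting r.v. independent of the
independent r.v.s `ξ₁,…,ξ_D`, `F_{ξ₁} ∈ 𝒞`, and for each `k = 2,…,D` either
`F_{ξ_k} ∈ 𝒞` or `P(ξ_k > x) = o(P(ξ₁ > x))`, then the distribution of the
randomly stopped sum `S_η` has a consistently varying tail. -/
theorem randomly_stopped_sum_consistently_varying_finite_support
    {Ω : Type*} [MeasurableSpace Ω] (μ : Measure Ω) [IsProbabilityMeasure μ]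
    (D : ℕ) (ξ : ℕ → Ω → ℝ) (η : Ω → ℕ)
    (hmeas : ∀ k, Measurable (ξ k)) (hηmeas : Measurable η)
    (hindep : ProbabilityTheory.iIndepFun ξ μ)
    (hindepη : ProbabilityTheory.IndepFun η (fun ω => fun k => ξ k ω) μ)
    (hηD : ∀ᵐ ω ∂μ, η ω ≤ D)
    (hηnondeg : μ {ω | η ω = 0} < 1)
    (hpos : ∀ k x, 0 < tailDist μ (ξ k) x)
    (hposS : ∀ x, 0 < tailDist μ (fun ω => ∑ k ∈ Finset.Icc 1 (η ω), ξ k ω) x)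
    (h1 : ConsistentlyVarying (tailDist μ (ξ 1)))
    (hk : ∀ k, 2 ≤ k → k ≤ D →
      ConsistentlyVarying (tailDist μ (ξ k)) ∨
        Tendsto (fun x => tailDist μ (ξ k) x / tailDist μ (ξ 1) x) atTop (𝓝 0)) :
    ConsistentlyVarying (tailDist μ (fun ω => ∑ k ∈ Finset.Icc 1 (η ω), ξ k ω)) := by
  classical
  set T1 : ℝ → ℝ := tailDist μ (ξ 1) with hT1def
  set S : ℕ → Ω → ℝ := fun n ω => ∑ k ∈ Finset.Icc 1 n, ξ k ω with hSdef
  set Sη : Ω → ℝ := fun ω => ∑ k ∈ Finset.Icc 1 (η ω), ξ k ω with hSηdef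
  have hSmeas : ∀ n, Measurable (S n) := fun n => Finset.measurable_sum _ fun k _ => hmeas k
  -- D = 0 is impossible
  rcases Nat.eq_zero_or_pos D with hD0 | hDpos
  · exfalso
    have h0 : ∀ᵐ ω ∂μ, ¬ (0:ℝ) < Sη ω := by
      filter_upwards [hηD] with ω hω
      have : η ω = 0 := by omega
      simp [hSηdef, this]
    have : μ {ω | (0:ℝ) < Sη ω} = 0 := by
      have := ae_iff.1 h0
      simpa using this
    have hp := hposS 0
    rw [tailDist, this] at hp
    simp at hp
  -- tail decomposition over the value of η
  have hdecomp : ∀ x : ℝ, tailDist μ Sη x =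
      ∑ n ∈ Finset.range (D+1), (μ (η ⁻¹' {n})).toReal * tailDist μ (S n) x := by
    intro x
    have hae : {ω | x < Sη ω} =ᵐ[μ]
        ⋃ n ∈ Finset.range (D+1), (η ⁻¹' {n} ∩ {ω | x < S n ω}) := by
      rw [eventuallyEq_set]
      filter_upwards [hηD] with ω hω
      simp only [Set.mem_iUnion, Set.mem_inter_iff, Set.mem_preimage, Set.mem_singleton_iff,
        Finset.mem_range, Set.mem_setOf_eq, exists_prop]
      constructor
      · intro h
        exact ⟨η ω, Nat.lt_succ_of_le hω, rfl, h⟩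
      · rintro ⟨n, -, rfl, h⟩
        exact h
    have hm : ∀ n ∈ Finset.range (D+1),
        MeasurableSet (η ⁻¹' {n} ∩ {ω | x < S n ω}) := fun n _ =>
      (hηmeas (measurableSet_singleton n)).inter (measurableSet_lt measurable_const (hSmeas n))
    have hd : Set.PairwiseDisjoint (↑(Finset.range (D+1)))
        (fun n => η ⁻¹' {n} ∩ {ω | x < S n ω}) := by
      intro i _ j _ hij
      refine Set.disjoint_left.2 fun ω hi hj => ?_
      exact hij (hi.1.symm.trans hj.1)
    have hterm : ∀ n, μ (η ⁻¹' {n} ∩ {ω | x < S n ω})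
        = μ (η ⁻¹' {n}) * μ {ω | x < S n ω} := by
      intro n
      have hBn : MeasurableSet {g : ℕ → ℝ | x < ∑ k ∈ Finset.Icc 1 n, g k} :=
        measurableSet_lt measurable_const (Finset.measurable_sum _ fun k _ => measurable_pi_apply k)
      exact hindepη.measure_inter_preimage_eq_mul {n} _ (measurableSet_singleton n) hBn
    calc tailDist μ Sη x
        = (μ (⋃ n ∈ Finset.range (D+1), (η ⁻¹' {n} ∩ {ω | x < S n ω}))).toReal := by
          rw [tailDist, measure_congr hae]
      _ = (∑ n ∈ Finset.range (D+1), μ (η ⁻¹' {n} ∩ {ω | x < S n ω})).toReal := by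
          rw [measure_biUnion_finset hd hm]
      _ = ∑ n ∈ Finset.range (D+1), (μ (η ⁻¹' {n} ∩ {ω | x < S n ω})).toReal :=
          ENNReal.toReal_sum fun n _ => measure_ne_top μ _
      _ = ∑ n ∈ Finset.range (D+1), (μ (η ⁻¹' {n})).toReal * tailDist μ (S n) x := by
          refine Finset.sum_congr rfl fun n _ => ?_
          rw [hterm n, ENNReal.toReal_mul]
          rfl
  -- the inductive claim for deterministic partial sums
  have hmain : ∀ n, 1 ≤ n → n ≤ D → CVB (tailDist μ (S n)) ∧ (∀ x, 0 < tailDist μ (S n) x) ∧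
      ∃ C : ℝ, 0 < C ∧ ∀ᶠ x in atTop, T1 x ≤ C * tailDist μ (S n) x := by
    intro n hn
    induction n, hn using Nat.le_induction with
    | base =>
      intro _
      have hSe : S 1 = ξ 1 := funext fun ω => by simp [hSdef]
      rw [hSe]
      exact ⟨cvb_of_cv (hpos 1) h1, hpos 1, 1, one_pos, by
        filter_upwards with x; rw [one_mul]⟩
    | succ n hn ih =>
      intro hn1
      have hnD : n ≤ D := Nat.le_of_succ_le hn1
      obtain ⟨hCVA, hApos, C, hC0, hCev⟩ := ih hnD
      set A : ℝ → ℝ := tailDist μ (S n) with hAdef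
      set B : ℝ → ℝ := tailDist μ (ξ (n+1)) with hBdef
      have hXZ : ProbabilityTheory.IndepFun (S n) (ξ (n+1)) μ := by
        have hnotmem : (n+1) ∉ Finset.Icc 1 n := by simp
        have h' := hindep.indepFun_finsetSum_of_notMem hmeas hnotmem
        have heq : (∑ j ∈ Finset.Icc 1 n, ξ j) = S n := by
          funext ω
          rw [hSdef]
          simp [Finset.sum_apply]
        rwa [heq] at h'
      have hWeq : tailDist μ (S (n+1)) = tailDist μ (fun ω => S n ω + ξ (n+1) ω) := by
        funext x
        have hset : {ω | x < S (n+1) ω} = {ω | x < S n ω + ξ (n+1) ω} := by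
          ext ω
          simp only [Set.mem_setOf_eq, hSdef]
          rw [← Finset.insert_Icc_right_eq_Icc_add_one (by omega : 1 ≤ n + 1),
            Finset.sum_insert (by simp)]
          constructor <;> intro h <;> linarith
        rw [tailDist, tailDist, hset]
      have hAanti : Antitone A := tailDist_antitone _
      have hBanti : Antitone B := tailDist_antitone _
      have hA0 : ∀ x, 0 ≤ A x := fun x => tailDist_nonneg _ x
      have hB0 : ∀ x, 0 ≤ B x := fun x => tailDist_nonneg _ x
      have hBsmall := tailDist_small (μ := μ) (hmeas (n+1))
      have hBlarge := tailDist_large (μ := μ) (hmeas (n+1))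
      have hAlarge := tailDist_large (μ := μ) (hSmeas n)
      set W : ℝ → ℝ := tailDist μ (S (n+1)) with hWdef
      have hW0 : ∀ x, 0 ≤ W x := fun x => tailDist_nonneg _ x
      have hupper : ∀ δ : ℝ, 0 < δ → δ ≤ 1/2 → ∀ x : ℝ, 0 < x →
          W x ≤ A (x * (1 - δ)) + B (x * (1 - δ)) + A (x * δ) * B (x * δ) := by
        intro δ hδ0 hδ2 x hx
        rw [hWeq]
        exact tail_sum_upper hXZ (hSmeas n) (hmeas (n+1)) hδ0 hδ2 hx
      have hlower : ∀ a x : ℝ,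
          A (x + a) * B (-a) + B (x + a) * A (-a) - A (x + a) * B (x + a) ≤ W x := by
        intro a x
        rw [hWeq]
        exact tail_sum_lower hXZ (hSmeas n) (hmeas (n+1)) a x
      -- positivity of W
      have hWpos : ∀ x, 0 < W x := by
        intro x
        have hxle : x ≤ max x 0 := le_max_left _ _
        have hmono : W (max x 0) ≤ W x := (tailDist_antitone _) hxle
        refine lt_of_lt_of_le ?_ hmono
        have hl := hlower 0 (max x 0)
        have hz : max x 0 + 0 = max x 0 := by ring
        rw [hz] at hl
        have hABz : A (max x 0) * B (max x 0) ≤ A 0 * B (max x 0) :=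
          mul_le_mul_of_nonneg_right (hAanti (le_max_right _ _)) (hB0 _)
        have hBA : B (max x 0) * A (-0) = B (max x 0) * A 0 := by norm_num
        have hpa : 0 < A (max x 0) := hApos _
        have hpb : 0 < B (-0) := hpos (n+1) _
        nlinarith [hl, hABz, hpa, hpb, hB0 (max x 0), hA0 0]
      -- case distinction on the tail of ξ (n+1)
      have hstep : CVB W ∧ ∃ C' : ℝ, 0 < C' ∧ ∀ᶠ x in atTop, T1 x ≤ C' * W x := by
        rcases hk (n+1) (by omega) hn1 with hcv | ho
        · -- consistently varying case
          have hCVB_B : CVB B := cvb_of_cv (hpos (n+1)) hcv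
          set K : ℝ → ℝ := fun x => A x + B x with hKdef
          have hCVK : CVB K := cvb_add hCVA hCVB_B
          have hK0 : ∀ x, 0 ≤ K x := fun x => add_nonneg (hA0 x) (hB0 x)
          have hAK : ∀ x, A x ≤ K x := fun x => by
            rw [hKdef]; simp only; linarith [hB0 x]
          have hAB : ∀ ε : ℝ, 0 < ε → ∀ᶠ x in atTop, A x + B x ≤ (1 + ε) * K x := by
            intro ε hε
            filter_upwards with x
            show A x + B x ≤ (1 + ε) * (A x + B x)
            nlinarith [mul_nonneg hε.le (add_nonneg (hA0 x) (hB0 x))]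
          have hKlong : ∀ ε : ℝ, 0 < ε → ∀ a : ℝ, 0 ≤ a →
              ∀ᶠ x in atTop, K x ≤ (1 + ε) * (A (x + a) + B (x + a)) := by
            intro ε hε a ha
            filter_upwards [cvb_long hCVA hAanti ha hε, cvb_long hCVB_B hBanti ha hε] with x u v
            rw [hKdef]
            simp only
            linarith
          obtain ⟨hCVW, hE2⟩ := cvb_conv hAanti hBanti hA0 hB0 hW0 hK0 hCVA hCVK hAK hAB
            hKlong hBsmall hBlarge hAlarge hupper hlower
          refine ⟨hCVW, 2 * C, by positivity, ?_⟩
          filter_upwards [hE2 1 one_pos, hCev] with x he hc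
          have : K x ≤ 2 * W x := by rw [one_add_one_eq_two] at he; exact he
          have hAKx : A x ≤ K x := hAK x
          nlinarith [hC0.le]
        · -- negligible case
          have hBoA : ∀ ε : ℝ, 0 < ε → ∀ᶠ x in atTop, B x ≤ ε * A x := by
            intro ε hε
            have hev := ho.eventually_le_const (show (0:ℝ) < ε / C by positivity)
            filter_upwards [hev, hCev] with x h1x h2x
            have hT1pos : 0 < T1 x := hpos 1 x
            have hBle : B x ≤ (ε / C) * T1 x := by
              rw [div_le_iff₀ hT1pos] at h1x
              linarith [h1x]
            calc B x ≤ (ε / C) * T1 x := hBle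
              _ ≤ (ε / C) * (C * A x) := by
                  refine mul_le_mul_of_nonneg_left h2x (by positivity)
              _ = ε * A x := by field_simp
          set K : ℝ → ℝ := A with hKdef
          have hCVK : CVB K := hCVA
          have hK0 : ∀ x, 0 ≤ K x := hA0
          have hAK : ∀ x, A x ≤ K x := fun x => le_refl _
          have hAB : ∀ ε : ℝ, 0 < ε → ∀ᶠ x in atTop, A x + B x ≤ (1 + ε) * K x := by
            intro ε hε
            filter_upwards [hBoA ε hε] with x hx
            have := hA0 x
            rw [hKdef]
            nlinarith
          have hKlong : ∀ ε : ℝ, 0 < ε → ∀ a : ℝ, 0 ≤ a →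
              ∀ᶠ x in atTop, K x ≤ (1 + ε) * (A (x + a) + B (x + a)) := by
            intro ε hε a ha
            filter_upwards [cvb_long hCVA hAanti ha hε] with x u
            have := hB0 (x + a)
            rw [hKdef]
            nlinarith
          obtain ⟨hCVW, hE2⟩ := cvb_conv hAanti hBanti hA0 hB0 hW0 hK0 hCVA hCVK hAK hAB
            hKlong hBsmall hBlarge hAlarge hupper hlower
          refine ⟨hCVW, 2 * C, by positivity, ?_⟩
          filter_upwards [hE2 1 one_pos, hCev] with x he hc
          have : K x ≤ 2 * W x := by rw [one_add_one_eq_two] at he; exact he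
          nlinarith [hC0.le]
      exact ⟨hstep.1, hWpos, hstep.2⟩
  -- assemble: CVB for the randomly stopped sum
  have hCVBSη : CVB (tailDist μ Sη) := by
    intro ε hε
    have hchoice : ∀ n : ℕ, ∃ y₀ : ℝ, 1/2 ≤ y₀ ∧ y₀ < 1 ∧ (1 ≤ n → n ≤ D →
        ∀ y, y₀ < y → y < 1 → ∀ᶠ x in atTop,
          tailDist μ (S n) (x * y) ≤ (1 + ε) * tailDist μ (S n) x) := by
      intro n
      by_cases hn : 1 ≤ n ∧ n ≤ D
      · obtain ⟨hc, -, -⟩ := hmain n hn.1 hn.2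
        obtain ⟨y₀, h1', h2', h3'⟩ := hc ε hε
        exact ⟨y₀, h1', h2', fun _ _ => h3'⟩
      · exact ⟨1/2, le_refl _, by norm_num, fun h1' h2' => absurd ⟨h1', h2'⟩ hn⟩
    choose Y hY1 hY2 hY3 using hchoice
    have hne : (Finset.range (D+1)).Nonempty := ⟨0, by simp⟩
    set y₀ : ℝ := Finset.sup' (Finset.range (D+1)) hne Y with hy₀def
    have hy₀half : 1/2 ≤ y₀ := le_trans (hY1 0) (Finset.le_sup' Y (by simp))
    have hy₀lt : y₀ < 1 := by
      rw [hy₀def, Finset.sup'_lt_iff]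
      exact fun n _ => hY2 n
    refine ⟨y₀, hy₀half, hy₀lt, fun y hy hy1 => ?_⟩
    have hy0 : 0 < y := by linarith
    have hev : ∀ᶠ x in atTop, (∀ n ∈ Finset.Icc 1 D,
        tailDist μ (S n) (x * y) ≤ (1 + ε) * tailDist μ (S n) x) := by
      rw [eventually_all_finset]
      intro n hn
      obtain ⟨hn1, hn2⟩ := Finset.mem_Icc.1 hn
      refine hY3 n hn1 hn2 y ?_ hy1
      refine lt_of_le_of_lt (Finset.le_sup' Y ?_) hy
      simp [Finset.mem_range]
      omega
    filter_upwards [hev, eventually_ge_atTop (0:ℝ)] with x hx hx0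
    rw [hdecomp (x * y), hdecomp x, Finset.mul_sum]
    refine Finset.sum_le_sum fun n hn => ?_
    have hpnn : 0 ≤ (μ (η ⁻¹' {n})).toReal := ENNReal.toReal_nonneg
    rcases Nat.eq_zero_or_pos n with rfl | hn1
    · have hzero : tailDist μ (S 0) (x * y) = 0 := by
        rw [tailDist]
        have : {ω | x * y < S 0 ω} = ∅ := by
          ext ω
          simp only [Set.mem_setOf_eq, Set.mem_empty_iff_false, iff_false, not_lt, hSdef]
          simp only [show Finset.Icc 1 0 = ∅ from rfl, Finset.sum_empty]
          positivity
        rw [this]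
        simp
      rw [hzero, mul_zero]
      have := tailDist_nonneg (μ := μ) (S 0) x
      positivity
    · have hnD : n ≤ D := by
        have := Finset.mem_range.1 hn
        omega
      have h := hx n (Finset.mem_Icc.2 ⟨hn1, hnD⟩)
      calc (μ (η ⁻¹' {n})).toReal * tailDist μ (S n) (x * y)
          ≤ (μ (η ⁻¹' {n})).toReal * ((1 + ε) * tailDist μ (S n) x) :=
            mul_le_mul_of_nonneg_left h hpnn
        _ = (1 + ε) * ((μ (η ⁻¹' {n})).toReal * tailDist μ (S n) x) := by ring
  exact cv_of_cvb hposS (tailDist_antitone _) hCVBSη
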